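/- For 0 < λ < 1 and δ > 0, the function h(ν) = a^{m+1} + a² b^{m-1} δ² / ((1+ν)(δ+ν)), with a = 1/(1+δ) and b = 1/(1+δ+ν), is strictly decreasing in ν on (0,∞), satisfies lim_{ν↓0} h(ν) = (1/(1+δ))^m and lim_{ν→∞} h(ν) = (1/(1+δ))^{m+1}; hence if (1/(1+δ))^{m+1} < 1-λ ≤ (1/(1+δ))^m, the equation h(ν) = 1-λ has a unique solution ν ≥ 0. -/

import Mathlib

theorem h_unique_root (lam δ : ℝ) (m : ℕ) (hm : 1 ≤ m) (hδ : 0 < δ)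
    (hlam0 : 0 < lam) (hlam1 : lam < 1)
    (hlow : (1 / (1 + δ)) ^ (m + 1) < 1 - lam) (hhigh : 1 - lam ≤ (1 / (1 + δ)) ^ m) :
    StrictAntiOn
      (fun ν : ℝ => (1 / (1 + δ)) ^ (m + 1) +
        (1 / (1 + δ)) ^ 2 * (1 / (1 + δ + ν)) ^ (m - 1) * δ ^ 2 / ((1 + ν) * (δ + ν)))
      (Set.Ioi 0) ∧
    Filter.Tendsto
      (fun ν : ℝ => (1 / (1 + δ)) ^ (m + 1) +
        (1 / (1 + δ)) ^ 2 * (1 / (1 + δ + ν)) ^ (m - 1) * δ ^ 2 / ((1 + ν) * (δ + ν)))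
      (nhdsWithin 0 (Set.Ioi 0)) (nhds ((1 / (1 + δ)) ^ m)) ∧
    Filter.Tendsto
      (fun ν : ℝ => (1 / (1 + δ)) ^ (m + 1) +
        (1 / (1 + δ)) ^ 2 * (1 / (1 + δ + ν)) ^ (m - 1) * δ ^ 2 / ((1 + ν) * (δ + ν)))
      Filter.atTop (nhds ((1 / (1 + δ)) ^ (m + 1))) ∧
    ∃! ν : ℝ, 0 ≤ ν ∧
      (1 / (1 + δ)) ^ (m + 1) +
        (1 / (1 + δ)) ^ 2 * (1 / (1 + δ + ν)) ^ (m - 1) * δ ^ 2 / ((1 + ν) * (δ + ν))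
        = 1 - lam := by
  obtain ⟨k, rfl⟩ : ∃ k, m = k + 1 := ⟨m - 1, (Nat.succ_pred_eq_of_pos hm).symm⟩
  simp only [Nat.add_sub_cancel]
  have hδ1 : (0:ℝ) < 1 + δ := by linarith
  set f : ℝ → ℝ := fun ν => (1 / (1 + δ)) ^ (k + 1 + 1) +
      (1 / (1 + δ)) ^ 2 * (1 / (1 + δ + ν)) ^ k * δ ^ 2 / ((1 + ν) * (δ + ν)) with hfdef
  -- strict antitonicity on Ici 0
  have hanti : StrictAntiOn f (Set.Ici 0) := by
    intro x hx y hy hxy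
    simp only [Set.mem_Ici] at hx hy
    have hDx : (0:ℝ) < (1 + x) * (δ + x) := by nlinarith
    have hDy : (0:ℝ) < (1 + y) * (δ + y) := by nlinarith
    have hbx : (0:ℝ) < 1 / (1 + δ + x) := one_div_pos.mpr (by linarith)
    have hby : (0:ℝ) < 1 / (1 + δ + y) := one_div_pos.mpr (by linarith)
    have hNy : (0:ℝ) < (1 / (1 + δ)) ^ 2 * (1 / (1 + δ + y)) ^ k * δ ^ 2 :=
      mul_pos (mul_pos (by positivity) (pow_pos hby k)) (by positivity)
    have hbm : (1 / (1 + δ + y)) ^ k ≤ (1 / (1 + δ + x)) ^ k := by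
      apply pow_le_pow_left₀ hby.le
      apply one_div_le_one_div_of_le (by linarith) (by linarith)
    have hDxy : (1 + x) * (δ + x) < (1 + y) * (δ + y) := by nlinarith
    simp only [hfdef]
    apply (add_lt_add_iff_left _).mpr
    rw [div_lt_div_iff₀ hDy hDx]
    calc (1 / (1 + δ)) ^ 2 * (1 / (1 + δ + y)) ^ k * δ ^ 2 * ((1 + x) * (δ + x))
        < (1 / (1 + δ)) ^ 2 * (1 / (1 + δ + y)) ^ k * δ ^ 2 * ((1 + y) * (δ + y)) :=
          mul_lt_mul_of_pos_left hDxy hNy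
      _ ≤ (1 / (1 + δ)) ^ 2 * (1 / (1 + δ + x)) ^ k * δ ^ 2 * ((1 + y) * (δ + y)) := by
          apply mul_le_mul_of_nonneg_right _ hDy.le
          apply mul_le_mul_of_nonneg_right _ (by positivity)
          exact mul_le_mul_of_nonneg_left hbm (by positivity)
  -- continuity on Ici 0
  have hcont : ∀ x : ℝ, 0 ≤ x → ContinuousAt f x := by
    intro x hx
    have h1 : (1:ℝ) + δ + x ≠ 0 := by positivity
    have h2 : ((1:ℝ) + x) * (δ + x) ≠ 0 := by positivity
    apply continuousAt_const.add
    exact ((((continuousAt_const.div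
        ((continuous_const.add continuous_id).continuousAt) h1).pow k).const_mul _).mul
      continuousAt_const).div
        (((continuous_const.add continuous_id).mul (continuous_const.add continuous_id)).continuousAt) h2
  -- value at 0
  have hf0 : f 0 = (1 / (1 + δ)) ^ (k + 1) := by
    simp only [hfdef, add_zero, one_mul]
    rw [mul_div_assoc, pow_two δ, mul_self_div_self]
    have hinv : (1 / (1 + δ)) * (1 + δ) = 1 := by field_simp
    linear_combination (1 / (1 + δ)) ^ (k + 1) * hinv
  -- limit at infinity
  have htop : Filter.Tendsto f Filter.atTop (nhds ((1 / (1 + δ)) ^ (k + 1 + 1))) := by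
    have hD1 : Filter.Tendsto (fun ν : ℝ => 1 + ν) Filter.atTop Filter.atTop :=
      Filter.tendsto_atTop_add_const_left _ 1 Filter.tendsto_id
    have hD2 : Filter.Tendsto (fun ν : ℝ => δ + ν) Filter.atTop Filter.atTop :=
      Filter.tendsto_atTop_add_const_left _ δ Filter.tendsto_id
    have hD : Filter.Tendsto (fun ν : ℝ => (1 + ν) * (δ + ν)) Filter.atTop Filter.atTop :=
      hD1.atTop_mul_atTop₀ hD2
    have hb : Filter.Tendsto (fun ν : ℝ => 1 / (1 + δ + ν)) Filter.atTop (nhds 0) := by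
      have hb0 : Filter.Tendsto (fun ν : ℝ => 1 + δ + ν) Filter.atTop Filter.atTop :=
        Filter.tendsto_atTop_add_const_left _ (1 + δ) Filter.tendsto_id
      simpa only [one_div, Function.comp_def] using tendsto_inv_atTop_zero.comp hb0
    have hN : Filter.Tendsto (fun ν : ℝ => (1 / (1 + δ)) ^ 2 * (1 / (1 + δ + ν)) ^ k * δ ^ 2)
        Filter.atTop (nhds ((1 / (1 + δ)) ^ 2 * 0 ^ k * δ ^ 2)) :=
      ((hb.pow k).const_mul _).mul_const _
    have := hN.div_atTop hD
    simpa [hfdef] using tendsto_const_nhds.add this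
  refine ⟨hanti.mono Set.Ioi_subset_Ici_self, ?_, htop, ?_⟩
  · have := ((hcont 0 le_rfl).tendsto.mono_left nhdsWithin_le_nhds :
      Filter.Tendsto f (nhdsWithin 0 (Set.Ioi 0)) (nhds (f 0)))
    rwa [hf0] at this
  · -- existence via IVT
    have hev : ∀ᶠ ν in Filter.atTop, f ν < 1 - lam :=
      htop.eventually (gt_mem_nhds hlow)
    obtain ⟨ν₁, hν₁0, hν₁⟩ : ∃ ν₁, 0 ≤ ν₁ ∧ f ν₁ < 1 - lam := by
      obtain ⟨ν₁, h1, h2⟩ := (hev.and (Filter.eventually_ge_atTop 0)).exists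
      exact ⟨ν₁, h2, h1⟩
    have hconOn : ContinuousOn f (Set.Icc 0 ν₁) := fun x hx =>
      (hcont x hx.1).continuousWithinAt
    have hmem : 1 - lam ∈ Set.Icc (f ν₁) (f 0) := ⟨hν₁.le, by rw [hf0]; exact hhigh⟩
    obtain ⟨ν, hνmem, hfν⟩ := intermediate_value_Icc' hν₁0 hconOn hmem
    refine ⟨ν, ⟨hνmem.1, hfν⟩, ?_⟩
    rintro y ⟨hy0, hfy⟩
    exact hanti.injOn hy0 hνmem.1 (hfy.trans hfν.symm)
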